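/- For every integer n ≥ 2 and every γ > 0, the function p ↦ β_{n,γ}(p) is strictly increasing on [0,1]; indeed its derivative on (0,1) equals n^{1−γ} · Σ_{k=0}^{n−1} C(n−1,k) p^k (1−p)^{n−1−k} ((k+1)^γ − k^γ) > 0. -/

import Mathlib

open MeasureTheory Real Finset

/-- `theta n γ p = E[(n/N(p))^{1-γ}]` where `N(p)-1 ~ Bin(n-1,p)`. -/
noncomputable def theta (n : ℕ) (γ p : ℝ) : ℝ :=
  ∑ k ∈ Finset.range n,
    ((n - 1).choose k : ℝ) * p ^ k * (1 - p) ^ (n - 1 - k) *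
      ((n : ℝ) / ((k : ℝ) + 1)) ^ (1 - γ)

/-- `beta n γ p = p * theta n γ p`. -/
noncomputable def beta (n : ℕ) (γ p : ℝ) : ℝ := p * theta n γ p

/-- Optimal tontine payout function. -/
noncomputable def Dopt (n : ℕ) (γ r : ℝ) (p : ℝ → ℝ) (t : ℝ) : ℝ :=
  beta n γ (p t) ^ (1 / γ) /
    ∫ s in Set.Ioi (0 : ℝ), Real.exp (-r * s) * beta n γ (p s) ^ (1 / γ)

/-- Cumulative discounted payout of the optimal tontine. -/
noncomputable def Delta (n : ℕ) (γ r : ℝ) (p : ℝ → ℝ) (t : ℝ) : ℝ :=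
  ∫ s in (0 : ℝ)..t, Real.exp (-r * s) * Dopt n γ r p s

private lemma hr_aux (N : ℕ) (γ : ℝ) (k : ℕ) :
    ((N : ℝ) / ((k : ℝ) + 1)) ^ (1 - γ) * ((k : ℝ) + 1)
      = (N : ℝ) ^ (1 - γ) * ((k : ℝ) + 1) ^ γ := by
  have hk : (0 : ℝ) < (k : ℝ) + 1 := by positivity
  have hN : (0 : ℝ) ≤ (N : ℝ) := by positivity
  have h2 : ((k : ℝ) + 1) ^ γ = ((k : ℝ) + 1) / ((k : ℝ) + 1) ^ (1 - γ) := by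
    rw [eq_div_iff (Real.rpow_pos_of_pos hk _).ne', ← Real.rpow_add hk,
      show γ + (1 - γ) = 1 by ring, Real.rpow_one]
  rw [Real.div_rpow hN hk.le, h2]
  ring

/-- The key derivative computation, valid for every real `p`. -/
private lemma beta_hasDerivAt (m : ℕ) (γ : ℝ) (hγ : 0 < γ) (p : ℝ) :
    HasDerivAt (fun q => beta (m + 1) γ q)
      (((m + 1 : ℕ) : ℝ) ^ (1 - γ) * ∑ k ∈ Finset.range (m + 1),
        (m.choose k : ℝ) * p ^ k * (1 - p) ^ (m - k) *
          (((k : ℝ) + 1) ^ γ - (k : ℝ) ^ γ)) p := by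
  set N : ℝ := ((m + 1 : ℕ) : ℝ) with hN
  set c : ℕ → ℝ := fun k => (m.choose k : ℝ) * (N / ((k : ℝ) + 1)) ^ (1 - γ) with hc
  set e : ℕ → ℝ → ℝ := fun k q =>
    (((k + 1 : ℕ) : ℝ) * q ^ k) * (1 - q) ^ (m - k)
      + q ^ (k + 1) * ((((m - k : ℕ) : ℝ) * (1 - q) ^ (m - k - 1)) * (-1)) with he
  have hbeta : (fun q => beta (m + 1) γ q)
      = fun q => ∑ k ∈ Finset.range (m + 1), c k * (q ^ (k + 1) * (1 - q) ^ (m - k)) := by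
    funext q
    unfold beta theta
    rw [Finset.mul_sum]
    refine Finset.sum_congr rfl fun k _ => ?_
    simp only [Nat.add_sub_cancel, hc]
    ring
  have hderiv : HasDerivAt (fun q => beta (m + 1) γ q)
      (∑ k ∈ Finset.range (m + 1), c k * e k p) p := by
    rw [hbeta]
    refine HasDerivAt.fun_sum fun k _ => HasDerivAt.const_mul _ ?_
    have hin : HasDerivAt (fun x : ℝ => 1 - x) (-1) p := by
      simpa using (hasDerivAt_id p).const_sub 1
    have h2 : HasDerivAt (fun x : ℝ => (1 - x) ^ (m - k))
        ((((m - k : ℕ) : ℝ) * (1 - p) ^ (m - k - 1)) * (-1)) p :=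
      (hasDerivAt_pow (m - k) (1 - p)).comp p hin
    have h1 : HasDerivAt (fun x : ℝ => x ^ (k + 1)) (((k + 1 : ℕ) : ℝ) * p ^ k) p := by
      simpa using hasDerivAt_pow (k + 1) p
    exact h1.mul h2
  have key : ∑ k ∈ Finset.range (m + 1), c k * e k p
      = N ^ (1 - γ) * ∑ k ∈ Finset.range (m + 1),
        (m.choose k : ℝ) * p ^ k * (1 - p) ^ (m - k) *
          (((k : ℝ) + 1) ^ γ - (k : ℝ) ^ γ) := by
    have hsplit : ∀ k ∈ Finset.range (m + 1), c k * e k p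
        = N ^ (1 - γ) * ((m.choose k : ℝ) * ((k : ℝ) + 1) ^ γ * p ^ k * (1 - p) ^ (m - k))
          - c k * (((m - k : ℕ) : ℝ) * p ^ (k + 1) * (1 - p) ^ (m - k - 1)) := by
      intro k _
      have hr := hr_aux (m + 1) γ k
      simp only [hc, he]
      push_cast
      linear_combination ((m.choose k : ℝ) * p ^ k * (1 - p) ^ (m - k)) * hr
    rw [Finset.sum_congr rfl hsplit, Finset.sum_sub_distrib]
    have hA : ∑ k ∈ Finset.range (m + 1),
        N ^ (1 - γ) * ((m.choose k : ℝ) * ((k : ℝ) + 1) ^ γ * p ^ k * (1 - p) ^ (m - k))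
        = N ^ (1 - γ) * ∑ k ∈ Finset.range (m + 1),
          (m.choose k : ℝ) * p ^ k * (1 - p) ^ (m - k) * ((k : ℝ) + 1) ^ γ := by
      rw [Finset.mul_sum]
      exact Finset.sum_congr rfl fun k _ => by ring
    have hB : ∑ k ∈ Finset.range (m + 1),
        c k * (((m - k : ℕ) : ℝ) * p ^ (k + 1) * (1 - p) ^ (m - k - 1))
        = N ^ (1 - γ) * ∑ k ∈ Finset.range (m + 1),
          (m.choose k : ℝ) * p ^ k * (1 - p) ^ (m - k) * (k : ℝ) ^ γ := by
      rw [Finset.mul_sum, Finset.sum_range_succ, Finset.sum_range_succ']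
      have h0 : N ^ (1 - γ) * ((m.choose 0 : ℝ) * p ^ 0 * (1 - p) ^ (m - 0) * ((0 : ℕ) : ℝ) ^ γ)
          = 0 := by
        rw [Nat.cast_zero, Real.zero_rpow hγ.ne']
        ring
      have hm0 : c m * (((m - m : ℕ) : ℝ) * p ^ (m + 1) * (1 - p) ^ (m - m - 1)) = 0 := by
        simp
      rw [h0, hm0, add_zero, add_zero]
      refine Finset.sum_congr rfl fun k hk => ?_
      have hkm : k < m := Finset.mem_range.mp hk
      have hch : ((m.choose (k + 1) : ℕ) : ℝ) * ((k : ℝ) + 1)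
          = (m.choose k : ℝ) * ((m - k : ℕ) : ℝ) := by
        rw [show ((k : ℝ) + 1) = ((k + 1 : ℕ) : ℝ) by push_cast; ring,
          ← Nat.cast_mul, ← Nat.cast_mul, Nat.choose_succ_right_eq]
      have hr := hr_aux (m + 1) γ k
      have hsub : m - (k + 1) = m - k - 1 := by omega
      simp only [hc, hsub]
      push_cast at hch ⊢
      linear_combination (-(p ^ (k + 1) * (1 - p) ^ (m - k - 1) * (N / ((k : ℝ) + 1)) ^ (1 - γ))) * hch
        + (p ^ (k + 1) * (1 - p) ^ (m - k - 1) * ((m.choose (k + 1) : ℕ) : ℝ)) * hr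
    rw [hA, hB, ← mul_sub, ← Finset.sum_sub_distrib]
    congr 1
    exact Finset.sum_congr rfl fun k _ => by ring
  rw [key] at hderiv
  exact hderiv

/-- `p ↦ β_{n,γ}(p)` is strictly increasing on `[0,1]`, and on `(0,1)` its
derivative equals `n^{1-γ} Σ_k C(n-1,k) p^k (1-p)^{n-1-k} ((k+1)^γ - k^γ)`, which is positive. -/
theorem beta_strictMono
    (n : ℕ) (hn : 2 ≤ n) (γ : ℝ) (hγ : 0 < γ) :
    StrictMonoOn (fun p => beta n γ p) (Set.Icc 0 1) ∧
    ∀ p ∈ Set.Ioo (0 : ℝ) 1,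
      HasDerivAt (fun q => beta n γ q)
        ((n : ℝ) ^ (1 - γ) * ∑ k ∈ Finset.range n,
          ((n - 1).choose k : ℝ) * p ^ k * (1 - p) ^ (n - 1 - k) *
            (((k : ℝ) + 1) ^ γ - (k : ℝ) ^ γ)) p ∧
      0 < (n : ℝ) ^ (1 - γ) * ∑ k ∈ Finset.range n,
          ((n - 1).choose k : ℝ) * p ^ k * (1 - p) ^ (n - 1 - k) *
            (((k : ℝ) + 1) ^ γ - (k : ℝ) ^ γ) := by
  obtain ⟨m, rfl⟩ : ∃ m, n = m + 1 := ⟨n - 1, by omega⟩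
  have hderiv : ∀ p : ℝ, HasDerivAt (fun q => beta (m + 1) γ q)
      (((m + 1 : ℕ) : ℝ) ^ (1 - γ) * ∑ k ∈ Finset.range (m + 1),
        ((m + 1 - 1).choose k : ℝ) * p ^ k * (1 - p) ^ (m + 1 - 1 - k) *
          (((k : ℝ) + 1) ^ γ - (k : ℝ) ^ γ)) p := by
    intro p
    simpa [Nat.add_sub_cancel] using beta_hasDerivAt m γ hγ p
  have hpos : ∀ p ∈ Set.Ioo (0 : ℝ) 1,
      0 < ((m + 1 : ℕ) : ℝ) ^ (1 - γ) * ∑ k ∈ Finset.range (m + 1),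
        ((m + 1 - 1).choose k : ℝ) * p ^ k * (1 - p) ^ (m + 1 - 1 - k) *
          (((k : ℝ) + 1) ^ γ - (k : ℝ) ^ γ) := by
    intro p hp
    have hp0 : 0 < p := hp.1
    have hp1 : 0 < 1 - p := by linarith [hp.2]
    refine mul_pos (Real.rpow_pos_of_pos (by positivity) _) ?_
    refine Finset.sum_pos' (fun k _ => ?_) ⟨0, Finset.mem_range.mpr (Nat.succ_pos m), ?_⟩
    · have h1 : (k : ℝ) ^ γ ≤ ((k : ℝ) + 1) ^ γ :=
        Real.rpow_le_rpow (by positivity) (by linarith) hγ.le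
      exact mul_nonneg (by positivity) (by linarith)
    · norm_num [Real.zero_rpow hγ.ne']
      positivity
  refine ⟨?_, fun p hp => ⟨hderiv p, hpos p hp⟩⟩
  have hcont : ContinuousOn (fun p => beta (m + 1) γ p) (Set.Icc 0 1) := by
    refine Continuous.continuousOn ?_
    unfold beta theta
    exact continuous_id.mul (continuous_finset_sum _ fun k _ => by fun_prop)
  refine strictMonoOn_of_deriv_pos (convex_Icc 0 1) hcont fun x hx => ?_
  rw [interior_Icc] at hx
  rw [(hderiv x).deriv]
  exact hpos x hx
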